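/- For i = 1, 2, let K_i ⊆ ℝ^{m_i} be a convex cone containing 0 (a convex set closed under nonnegative scalar multiplication and under addition), let A_i : ℝ^n → ℝ^{m_i} and B_i : ℝ^{p_i} → ℝ^{m_i} be linear maps, let b_i ∈ ℝ^{m_i}, and define S_i := { x ∈ ℝ^n : ∃ u ∈ ℝ^{p_i}, A_i x + B_i u − b_i ∈ K_i }. Define Q := { x ∈ ℝ^n : ∃ x¹, x² ∈ ℝ^n, u¹ ∈ ℝ^{p_1}, u² ∈ ℝ^{p_2}, λ_1, λ_2 ∈ ℝ, with λ_1, λ_2 ≥ 0, λ_1 + λ_2 = 1, x = x¹ + x², and A_i x^i + B_i u^i − λ_i b_i ∈ K_i for i = 1, 2 }. If S_1 and S_2 are both nonempty and bounded, then Q ⊆ conv(S_1 ∪ S_2); combined with the reverse inclusion, Q equals the convex hull of S_1 ∪ S_2. -/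

import Mathlib

/-- Recession lemma: if `S = {x | ∃ u, A x + B u - b ∈ K}` is nonempty and bounded
and `A x + B u ∈ K`, then `x = 0`. -/
lemma recession_zero {n m p : ℕ}
    (K : Set (Fin m → ℝ))
    (hsmul : ∀ t : ℝ, 0 ≤ t → ∀ k ∈ K, t • k ∈ K)
    (hadd : ∀ k₁ ∈ K, ∀ k₂ ∈ K, k₁ + k₂ ∈ K)
    (A : (Fin n → ℝ) →ₗ[ℝ] (Fin m → ℝ)) (B : (Fin p → ℝ) →ₗ[ℝ] (Fin m → ℝ))
    (b : Fin m → ℝ) (S : Set (Fin n → ℝ))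
    (hS : S = {x | ∃ u : Fin p → ℝ, A x + B u - b ∈ K})
    (hne : S.Nonempty) (hbdd : Bornology.IsBounded S)
    (x : Fin n → ℝ) (u : Fin p → ℝ) (hx : A x + B u ∈ K) : x = 0 := by
  obtain ⟨y, hy⟩ := hne
  rw [hS] at hy
  obtain ⟨v, hv⟩ := hy
  obtain ⟨C, hC⟩ := hbdd.exists_norm_le
  by_contra hx0
  have hxnorm : 0 < ‖x‖ := norm_pos_iff.mpr hx0
  set t : ℝ := (C + ‖y‖ + 1) / ‖x‖ with ht
  have hCy : 0 ≤ C := le_trans (norm_nonneg y) (hC y (by rw [hS]; exact ⟨v, hv⟩))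
  have htpos : 0 ≤ t := by positivity
  have hmem : y + t • x ∈ S := by
    rw [hS]
    refine ⟨v + t • u, ?_⟩
    have : A (y + t • x) + B (v + t • u) - b = (A y + B v - b) + t • (A x + B u) := by
      simp only [map_add, map_smul, smul_add]
      abel
    rw [this]
    exact hadd _ hv _ (hsmul t htpos _ hx)
  have h1 : ‖y + t • x‖ ≤ C := hC _ hmem
  have h2 : t * ‖x‖ = C + ‖y‖ + 1 := by
    rw [ht]; field_simp [hxnorm.ne']
  have h3 : t * ‖x‖ - ‖y‖ ≤ ‖y + t • x‖ := by
    have := norm_sub_le (y + t • x) y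
    simp only [add_sub_cancel_left] at this
    calc t * ‖x‖ - ‖y‖ = ‖t • x‖ - ‖y‖ := by rw [norm_smul, Real.norm_of_nonneg htpos]
    _ ≤ ‖y + t • x‖ := by linarith
  rw [h2] at h3
  linarith

/-- Main claim of Appendix A: for two nonempty, bounded conic representable sets the
extended formulation `Q` is contained in `conv(S₁ ∪ S₂)`, and combined with the
reverse inclusion equals the convex hull of the union. -/
theorem conic_union_extended_formulation_exact
    (n m₁ m₂ p₁ p₂ : ℕ)
    (K₁ : Set (Fin m₁ → ℝ)) (K₂ : Set (Fin m₂ → ℝ))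
    (hK₁conv : Convex ℝ K₁) (hK₁zero : (0 : Fin m₁ → ℝ) ∈ K₁)
    (hK₁smul : ∀ t : ℝ, 0 ≤ t → ∀ k ∈ K₁, t • k ∈ K₁)
    (hK₁add : ∀ k₁ ∈ K₁, ∀ k₂ ∈ K₁, k₁ + k₂ ∈ K₁)
    (hK₂conv : Convex ℝ K₂) (hK₂zero : (0 : Fin m₂ → ℝ) ∈ K₂)
    (hK₂smul : ∀ t : ℝ, 0 ≤ t → ∀ k ∈ K₂, t • k ∈ K₂)
    (hK₂add : ∀ k₁ ∈ K₂, ∀ k₂ ∈ K₂, k₁ + k₂ ∈ K₂)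
    (A₁ : (Fin n → ℝ) →ₗ[ℝ] (Fin m₁ → ℝ)) (B₁ : (Fin p₁ → ℝ) →ₗ[ℝ] (Fin m₁ → ℝ))
    (b₁ : Fin m₁ → ℝ)
    (A₂ : (Fin n → ℝ) →ₗ[ℝ] (Fin m₂ → ℝ)) (B₂ : (Fin p₂ → ℝ) →ₗ[ℝ] (Fin m₂ → ℝ))
    (b₂ : Fin m₂ → ℝ)
    (S₁ S₂ Q : Set (Fin n → ℝ))
    (hS₁ : S₁ = {x | ∃ u : Fin p₁ → ℝ, A₁ x + B₁ u - b₁ ∈ K₁})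
    (hS₂ : S₂ = {x | ∃ u : Fin p₂ → ℝ, A₂ x + B₂ u - b₂ ∈ K₂})
    (hQ : Q = {x | ∃ (x₁ x₂ : Fin n → ℝ) (u₁ : Fin p₁ → ℝ) (u₂ : Fin p₂ → ℝ)
      (l₁ l₂ : ℝ), 0 ≤ l₁ ∧ 0 ≤ l₂ ∧ l₁ + l₂ = 1 ∧ x = x₁ + x₂ ∧
      A₁ x₁ + B₁ u₁ - l₁ • b₁ ∈ K₁ ∧ A₂ x₂ + B₂ u₂ - l₂ • b₂ ∈ K₂})
    (hS₁ne : S₁.Nonempty) (hS₂ne : S₂.Nonempty)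
    (hS₁bdd : Bornology.IsBounded S₁) (hS₂bdd : Bornology.IsBounded S₂) :
    Q ⊆ convexHull ℝ (S₁ ∪ S₂) ∧ Q = convexHull ℝ (S₁ ∪ S₂) := by
  -- Forward inclusion
  have hsub : Q ⊆ convexHull ℝ (S₁ ∪ S₂) := by
    intro x hx
    rw [hQ] at hx
    obtain ⟨x₁, x₂, u₁, u₂, l₁, l₂, hl₁, hl₂, hsum, hxeq, hk₁, hk₂⟩ := hx
    rcases eq_or_lt_of_le hl₁ with h1 | h1
    · -- l₁ = 0, so l₂ = 1, x₁ = 0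
      have hl₂1 : l₂ = 1 := by linarith
      have hx₁0 : x₁ = 0 := by
        apply recession_zero K₁ hK₁smul hK₁add A₁ B₁ b₁ S₁ hS₁ hS₁ne hS₁bdd x₁ u₁
        simpa [← h1] using hk₁
      have : x ∈ S₂ := by
        rw [hS₂]
        refine ⟨u₂, ?_⟩
        have : x = x₂ := by rw [hxeq, hx₁0, zero_add]
        rw [this]
        simpa [hl₂1] using hk₂
      exact subset_convexHull ℝ _ (Set.mem_union_right _ this)
    rcases eq_or_lt_of_le hl₂ with h2 | h2
    · -- l₂ = 0, so l₁ = 1, x₂ = 0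
      have hl₁1 : l₁ = 1 := by linarith
      have hx₂0 : x₂ = 0 := by
        apply recession_zero K₂ hK₂smul hK₂add A₂ B₂ b₂ S₂ hS₂ hS₂ne hS₂bdd x₂ u₂
        simpa [← h2] using hk₂
      have : x ∈ S₁ := by
        rw [hS₁]
        refine ⟨u₁, ?_⟩
        have : x = x₁ := by rw [hxeq, hx₂0, add_zero]
        rw [this]
        simpa [hl₁1] using hk₁
      exact subset_convexHull ℝ _ (Set.mem_union_left _ this)
    · -- both positive: genuine convex combination
      have hy₁ : l₁⁻¹ • x₁ ∈ S₁ := by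
        rw [hS₁]
        refine ⟨l₁⁻¹ • u₁, ?_⟩
        have : A₁ (l₁⁻¹ • x₁) + B₁ (l₁⁻¹ • u₁) - b₁
            = l₁⁻¹ • (A₁ x₁ + B₁ u₁ - l₁ • b₁) := by
          simp only [map_smul, smul_sub, smul_add, smul_smul,
            inv_mul_cancel₀ (ne_of_gt h1), one_smul]
        rw [this]
        exact hK₁smul _ (by positivity) _ hk₁
      have hy₂ : l₂⁻¹ • x₂ ∈ S₂ := by
        rw [hS₂]
        refine ⟨l₂⁻¹ • u₂, ?_⟩
        have : A₂ (l₂⁻¹ • x₂) + B₂ (l₂⁻¹ • u₂) - b₂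
            = l₂⁻¹ • (A₂ x₂ + B₂ u₂ - l₂ • b₂) := by
          simp only [map_smul, smul_sub, smul_add, smul_smul,
            inv_mul_cancel₀ (ne_of_gt h2), one_smul]
        rw [this]
        exact hK₂smul _ (by positivity) _ hk₂
      have hxcomb : x = l₁ • (l₁⁻¹ • x₁) + l₂ • (l₂⁻¹ • x₂) := by
        rw [smul_smul, smul_smul, mul_inv_cancel₀ (ne_of_gt h1),
          mul_inv_cancel₀ (ne_of_gt h2), one_smul, one_smul, hxeq]
      rw [hxcomb]
      exact (convex_convexHull ℝ _)
        (subset_convexHull ℝ _ (Set.mem_union_left _ hy₁))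
        (subset_convexHull ℝ _ (Set.mem_union_right _ hy₂)) hl₁ hl₂ hsum
  refine ⟨hsub, le_antisymm hsub ?_⟩
  -- Reverse inclusion: Q convex and contains S₁ ∪ S₂
  apply convexHull_min
  · rintro x (hx | hx)
    · rw [hS₁] at hx
      obtain ⟨u, hu⟩ := hx
      rw [hQ]
      exact ⟨x, 0, u, 0, 1, 0, zero_le_one, le_refl 0, by ring, by simp,
        by simpa using hu, by simpa using hK₂zero⟩
    · rw [hS₂] at hx
      obtain ⟨u, hu⟩ := hx
      rw [hQ]
      exact ⟨0, x, 0, u, 0, 1, le_refl 0, zero_le_one, by ring, by simp,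
        by simpa using hK₁zero, by simpa using hu⟩
  · -- convexity of Q
    rw [hQ]
    rintro x ⟨x₁, x₂, u₁, u₂, l₁, l₂, hl₁, hl₂, hsum, hxeq, hk₁, hk₂⟩
      y ⟨y₁, y₂, v₁, v₂, r₁, r₂, hr₁, hr₂, hrsum, hyeq, hj₁, hj₂⟩ a b ha hb hab
    refine ⟨a • x₁ + b • y₁, a • x₂ + b • y₂, a • u₁ + b • v₁, a • u₂ + b • v₂,
      a * l₁ + b * r₁, a * l₂ + b * r₂, by positivity, by positivity,
      by nlinarith, ?_, ?_, ?_⟩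
    · rw [hxeq, hyeq]; module
    · have : A₁ (a • x₁ + b • y₁) + B₁ (a • u₁ + b • v₁) - (a * l₁ + b * r₁) • b₁
          = a • (A₁ x₁ + B₁ u₁ - l₁ • b₁) + b • (A₁ y₁ + B₁ v₁ - r₁ • b₁) := by
        simp only [map_add, map_smul]; module
      rw [this]
      exact hK₁add _ (hK₁smul a ha _ hk₁) _ (hK₁smul b hb _ hj₁)
    · have : A₂ (a • x₂ + b • y₂) + B₂ (a • u₂ + b • v₂) - (a * l₂ + b * r₂) • b₂
          = a • (A₂ x₂ + B₂ u₂ - l₂ • b₂) + b • (A₂ y₂ + B₂ v₂ - r₂ • b₂) := by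
        simp only [map_add, map_smul]; module
      rw [this]
      exact hK₂add _ (hK₂smul a ha _ hk₂) _ (hK₂smul b hb _ hj₂)
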